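/- For Laplacian matrices L and L_s of connected graphs satisfying (1-ε)L ⪯ L_s ⪯ (1+ε)L with ε ∈ (0,1), the quantity tr(L_s^†) + tr(L^†) − 4·tr((L+L_s)^†) is bounded above by [ε(4-ε)/((1-ε)(2+ε))] · tr(L^†). -/

import Mathlib

open Matrix

/-- `B` is the Moore–Penrose pseudoinverse of `A`. -/
def IsMPInv {n : ℕ} (A B : Matrix (Fin n) (Fin n) ℝ) : Prop :=
  A * B * A = A ∧ B * A * B = B ∧ (A * B)ᵀ = A * B ∧ (B * A)ᵀ = B * A

section Aux

variable {n : ℕ}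

lemma dot_symm (M : Matrix (Fin n) (Fin n) ℝ) (hM : Mᵀ = M) (v w : Fin n → ℝ) :
    v ⬝ᵥ (M *ᵥ w) = (M *ᵥ v) ⬝ᵥ w := by
  rw [Matrix.dotProduct_mulVec]
  nth_rewrite 1 [← hM]
  rw [Matrix.vecMul_transpose]

lemma mp_unique {A X Y : Matrix (Fin n) (Fin n) ℝ} (hX : IsMPInv A X) (hY : IsMPInv A Y) :
    X = Y := by
  obtain ⟨x1, x2, x3, x4⟩ := hX
  obtain ⟨y1, y2, y3, y4⟩ := hY
  have hAX : A * X = A * Y := by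
    calc A * X = (A * Y) * (A * X) := by rw [← Matrix.mul_assoc (A*Y) A X, y1]
    _ = (A * Y)ᵀ * (A * X)ᵀ := by rw [x3, y3]
    _ = ((A * X) * (A * Y))ᵀ := (Matrix.transpose_mul _ _).symm
    _ = (A * Y)ᵀ := by rw [← Matrix.mul_assoc (A*X) A Y, x1]
    _ = A * Y := y3
  have hXA : X * A = Y * A := by
    calc X * A = (X * A) * (Y * A) := by
          rw [Matrix.mul_assoc X A (Y*A), ← Matrix.mul_assoc A Y A, y1]
    _ = (X * A)ᵀ * (Y * A)ᵀ := by rw [x4, y4]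
    _ = ((Y * A) * (X * A))ᵀ := (Matrix.transpose_mul _ _).symm
    _ = (Y * A)ᵀ := by rw [Matrix.mul_assoc Y A (X*A), ← Matrix.mul_assoc A X A, x1]
    _ = Y * A := y4
  calc X = X * A * X := x2.symm
  _ = Y * A * X := by rw [hXA]
  _ = Y * (A * X) := Matrix.mul_assoc ..
  _ = Y * (A * Y) := by rw [hAX]
  _ = Y * A * Y := (Matrix.mul_assoc ..).symm
  _ = Y := y2

lemma mp_symm' {A X : Matrix (Fin n) (Fin n) ℝ} (hA : Aᵀ = A) (hX : IsMPInv A X) :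
    Xᵀ = X := by
  obtain ⟨x1, x2, x3, x4⟩ := hX
  have hXt : IsMPInv A Xᵀ := by
    refine ⟨?_, ?_, ?_, ?_⟩
    · calc A * Xᵀ * A = (Aᵀ * X * Aᵀ)ᵀ := by
            simp [Matrix.transpose_mul, Matrix.mul_assoc]
      _ = A := by rw [hA, x1, hA]
    · calc Xᵀ * A * Xᵀ = (X * Aᵀ * X)ᵀ := by simp [Matrix.transpose_mul, Matrix.mul_assoc]
      _ = Xᵀ := by rw [hA, x2]
    · calc (A * Xᵀ)ᵀ = X * Aᵀ := by simp [Matrix.transpose_mul]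
      _ = X * A := by rw [hA]
      _ = (X * A)ᵀ := x4.symm
      _ = Aᵀ * Xᵀ := by simp [Matrix.transpose_mul]
      _ = A * Xᵀ := by rw [hA]
    · calc (Xᵀ * A)ᵀ = Aᵀ * X := by simp [Matrix.transpose_mul]
      _ = A * X := by rw [hA]
      _ = (A * X)ᵀ := x3.symm
      _ = Xᵀ * Aᵀ := by simp [Matrix.transpose_mul]
      _ = Xᵀ * A := by rw [hA]
  exact (mp_unique hXt ⟨x1, x2, x3, x4⟩ : Xᵀ = X)

lemma mp_smul {A X : Matrix (Fin n) (Fin n) ℝ} {c : ℝ} (hc : c ≠ 0) (hX : IsMPInv A X) :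
    IsMPInv (c • A) (c⁻¹ • X) := by
  obtain ⟨x1, x2, x3, x4⟩ := hX
  refine ⟨?_, ?_, ?_, ?_⟩
  · simp only [Matrix.smul_mul, Matrix.mul_smul, smul_smul, x1]
    rw [show c * (c⁻¹ * c) = c by field_simp]
  · simp only [Matrix.smul_mul, Matrix.mul_smul, smul_smul, x2]
    rw [show c⁻¹ * (c * c⁻¹) = c⁻¹ by field_simp]
  · simp only [Matrix.smul_mul, Matrix.mul_smul, smul_smul, Matrix.transpose_smul, x3]
  · simp only [Matrix.smul_mul, Matrix.mul_smul, smul_smul, Matrix.transpose_smul, x4]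

lemma mp_comm {A X : Matrix (Fin n) (Fin n) ℝ} (hA : Aᵀ = A) (hX : IsMPInv A X) :
    A * X = X * A := by
  have hXs := mp_symm' hA hX
  calc A * X = (A * X)ᵀ := hX.2.2.1.symm
  _ = Xᵀ * Aᵀ := Matrix.transpose_mul _ _
  _ = X * A := by rw [hXs, hA]

lemma mp_dinv_one {A X : Matrix (Fin n) (Fin n) ℝ} (hA : Aᵀ = A)
    (hAone : A *ᵥ (fun _ => (1:ℝ)) = 0) (hX : IsMPInv A X) :
    X *ᵥ (fun _ => (1:ℝ)) = 0 := by
  have hc := mp_comm hA hX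
  have : X = X * X * A := by
    calc X = X * A * X := hX.2.1.symm
    _ = X * (A * X) := Matrix.mul_assoc ..
    _ = X * (X * A) := by rw [hc]
    _ = X * X * A := (Matrix.mul_assoc ..).symm
  rw [this, ← Matrix.mulVec_mulVec, hAone, Matrix.mulVec_zero]

lemma mp_proj_one {A X : Matrix (Fin n) (Fin n) ℝ} (hA : Aᵀ = A)
    (hAone : A *ᵥ (fun _ => (1:ℝ)) = 0) (hX : IsMPInv A X) :
    (A * X) *ᵥ (fun _ => (1:ℝ)) = 0 := by
  rw [← Matrix.mulVec_mulVec, mp_dinv_one hA hAone hX, Matrix.mulVec_zero]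

lemma proj_eq {A X B Y : Matrix (Fin n) (Fin n) ℝ}
    (hA : Aᵀ = A) (hAone : A *ᵥ (fun _ => (1:ℝ)) = 0)
    (hAker : ∀ x, A *ᵥ x = 0 → ∃ c : ℝ, x = fun _ => c)
    (hB : Bᵀ = B) (hBone : B *ᵥ (fun _ => (1:ℝ)) = 0)
    (hBker : ∀ x, B *ᵥ x = 0 → ∃ c : ℝ, x = fun _ => c)
    (hX : IsMPInv A X) (hY : IsMPInv B Y) :
    A * X = B * Y := by
  rcases Nat.eq_zero_or_pos n with hn | hn
  · subst hn
    ext i j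
    exact i.elim0
  have key : ∀ x : Fin n → ℝ, (A * X) *ᵥ x = (B * Y) *ᵥ x := by
    intro x
    have hkerA : A *ᵥ (x - (A * X) *ᵥ x) = 0 := by
      rw [Matrix.mulVec_sub, Matrix.mulVec_mulVec, mp_comm hA hX, ← Matrix.mul_assoc A X A,
        hX.1, sub_self]
    have hkerB : B *ᵥ (x - (B * Y) *ᵥ x) = 0 := by
      rw [Matrix.mulVec_sub, Matrix.mulVec_mulVec, mp_comm hB hY, ← Matrix.mul_assoc B Y B,
        hY.1, sub_self]
    obtain ⟨c1, hc1⟩ := hAker _ hkerA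
    obtain ⟨c2, hc2⟩ := hBker _ hkerB
    have hA1 : (A * X) *ᵥ x = fun i => x i - c1 := by
      funext i
      have := congrFun hc1 i
      simp only [Pi.sub_apply] at this
      linarith [this]
    have hB1 : (B * Y) *ᵥ x = fun i => x i - c2 := by
      funext i
      have := congrFun hc2 i
      simp only [Pi.sub_apply] at this
      linarith [this]
    have sA : ∑ i, ((A * X) *ᵥ x) i = 0 := by
      have h0 := mp_proj_one hA hAone hX
      have : (fun _ => (1:ℝ)) ⬝ᵥ ((A * X) *ᵥ x) = 0 := by
        rw [dot_symm _ hX.2.2.1, h0, zero_dotProduct]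
      simpa [dotProduct] using this
    have sB : ∑ i, ((B * Y) *ᵥ x) i = 0 := by
      have h0 := mp_proj_one hB hBone hY
      have : (fun _ => (1:ℝ)) ⬝ᵥ ((B * Y) *ᵥ x) = 0 := by
        rw [dot_symm _ hY.2.2.1, h0, zero_dotProduct]
      simpa [dotProduct] using this
    rw [hA1] at sA
    rw [hB1] at sB
    simp only [Finset.sum_sub_distrib, Finset.sum_const, Finset.card_univ, Fintype.card_fin,
      nsmul_eq_mul] at sA sB
    have hcc : c1 = c2 := by
      have hn' : (0:ℝ) < n := by exact_mod_cast hn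
      have : (n:ℝ) * c1 = (n:ℝ) * c2 := by linarith
      exact mul_left_cancel₀ (ne_of_gt hn') this
    rw [hA1, hB1, hcc]
  ext i j
  have := congrFun (key (Pi.single j 1)) i
  simpa [Matrix.mulVec_single] using this

lemma trace_mp_mono {A B Ad Bd : Matrix (Fin n) (Fin n) ℝ}
    (hAsym : Aᵀ = A) (hApsd : A.PosSemidef) (hAone : A *ᵥ (fun _ => (1:ℝ)) = 0)
    (hAker : ∀ x, A *ᵥ x = 0 → ∃ c : ℝ, x = fun _ => c)
    (hBsym : Bᵀ = B) (hBone : B *ᵥ (fun _ => (1:ℝ)) = 0)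
    (hBker : ∀ x, B *ᵥ x = 0 → ∃ c : ℝ, x = fun _ => c)
    (hBA : (B - A).PosSemidef)
    (hAd : IsMPInv A Ad) (hBd : IsMPInv B Bd) :
    Bd.trace ≤ Ad.trace := by
  have hAds : Adᵀ = Ad := mp_symm' hAsym hAd
  have hBds : Bdᵀ = Bd := mp_symm' hBsym hBd
  have hcA : A * Ad = Ad * A := mp_comm hAsym hAd
  have hcB : B * Bd = Bd * B := mp_comm hBsym hBd
  obtain ⟨M, hM⟩ : ∃ M, M = A * Ad := ⟨_, rfl⟩
  have hMN : M = B * Bd := by rw [hM]; exact proj_eq hAsym hAone hAker hBsym hBone hBker hAd hBd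
  have hMs : Mᵀ = M := by rw [hM]; exact hAd.2.2.1
  have hMAd : M * Ad = Ad := by
    rw [hM, hcA, hAd.2.1]
  have hMBd : M * Bd = Bd := by
    rw [hMN, hcB, hBd.2.1]
  have diag_le : ∀ i : Fin n, Bd i i ≤ Ad i i := by
    intro i
    set e : Fin n → ℝ := Pi.single i 1 with he
    set v : Fin n → ℝ := M *ᵥ e with hv
    set y : Fin n → ℝ := Ad *ᵥ e with hy
    set x : Fin n → ℝ := Bd *ᵥ v with hx
    -- quadratic form reduction through projection
    have hq : ∀ (C : Matrix (Fin n) (Fin n) ℝ), Cᵀ = C → M * C = C →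
        v ⬝ᵥ (C *ᵥ v) = e ⬝ᵥ (C *ᵥ e) := by
      intro C hCs hMC
      have hCM : C * M = C := by
        calc C * M = (Mᵀ * Cᵀ)ᵀ := by rw [← Matrix.transpose_mul, Matrix.transpose_transpose]
        _ = (M * C)ᵀ := by rw [hMs, hCs]
        _ = C := by rw [hMC, hCs]
      calc v ⬝ᵥ (C *ᵥ v) = (M *ᵥ e) ⬝ᵥ ((C * M) *ᵥ e) := by
            rw [hv, Matrix.mulVec_mulVec]
      _ = (M *ᵥ e) ⬝ᵥ (C *ᵥ e) := by rw [hCM]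
      _ = e ⬝ᵥ (M *ᵥ (C *ᵥ e)) := (dot_symm M hMs e _).symm
      _ = e ⬝ᵥ ((M * C) *ᵥ e) := by rw [Matrix.mulVec_mulVec]
      _ = e ⬝ᵥ (C *ᵥ e) := by rw [hMC]
    have hvAy : v = A *ᵥ y := by rw [hv, hy, Matrix.mulVec_mulVec, ← hM]
    have hAdM : Ad * M = Ad := by
      calc Ad * M = (Mᵀ * Adᵀ)ᵀ := by rw [← Matrix.transpose_mul, Matrix.transpose_transpose]
      _ = (M * Ad)ᵀ := by rw [hMs, hAds]
      _ = Ad := by rw [hMAd, hAds]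
    have hAdv : Ad *ᵥ v = y := by
      rw [hv, hy, Matrix.mulVec_mulVec, hAdM]
    -- key scalar facts
    have hxv : x ⬝ᵥ v = v ⬝ᵥ (Bd *ᵥ v) := by
      rw [hx]; exact dotProduct_comm _ _
    have hxBx : x ⬝ᵥ (B *ᵥ x) = v ⬝ᵥ (Bd *ᵥ v) := by
      have hbx : B *ᵥ x = (B * Bd) *ᵥ v := by rw [hx, Matrix.mulVec_mulVec]
      calc x ⬝ᵥ (B *ᵥ x) = (Bd *ᵥ v) ⬝ᵥ ((B * Bd) *ᵥ v) := by rw [hx, hbx]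
      _ = v ⬝ᵥ (Bd *ᵥ ((B * Bd) *ᵥ v)) := (dot_symm Bd hBds v _).symm
      _ = v ⬝ᵥ ((Bd * (B * Bd)) *ᵥ v) := by rw [Matrix.mulVec_mulVec]
      _ = v ⬝ᵥ (Bd *ᵥ v) := by rw [← Matrix.mul_assoc, hBd.2.1]
    have hAB : x ⬝ᵥ (A *ᵥ x) ≤ x ⬝ᵥ (B *ᵥ x) := by
      have h0 := hBA.dotProduct_mulVec_nonneg x
      simp only [star_trivial, Matrix.sub_mulVec, dotProduct_sub] at h0
      linarith
    have hexp : 0 ≤ x ⬝ᵥ (A *ᵥ x) - 2 * (x ⬝ᵥ v) + y ⬝ᵥ (A *ᵥ y) := by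
      have h0 := hApsd.dotProduct_mulVec_nonneg (x - y)
      simp only [star_trivial, Matrix.mulVec_sub, dotProduct_sub,
        sub_dotProduct] at h0
      have hyAx : y ⬝ᵥ (A *ᵥ x) = x ⬝ᵥ v := by
        rw [dot_symm A hAsym, ← hvAy, dotProduct_comm]
      have hxAy : x ⬝ᵥ (A *ᵥ y) = x ⬝ᵥ v := by rw [← hvAy]
      linarith
    have hyAy : y ⬝ᵥ (A *ᵥ y) = v ⬝ᵥ (Ad *ᵥ v) := by
      rw [hAdv, hvAy]
      exact dot_symm A hAsym y y
    have hBdii : e ⬝ᵥ (Bd *ᵥ e) = Bd i i := by simp [he, Matrix.mulVec_single]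
    have hAdii : e ⬝ᵥ (Ad *ᵥ e) = Ad i i := by simp [he, Matrix.mulVec_single]
    linarith [hq Bd hBds hMBd, hq Ad hAds hMAd]
  rw [Matrix.trace, Matrix.trace]
  exact Finset.sum_le_sum (fun i _ => diag_le i)

lemma psd_smul {A : Matrix (Fin n) (Fin n) ℝ} (hA : A.PosSemidef) {c : ℝ} (hc : 0 ≤ c) :
    (c • A).PosSemidef := by
  refine Matrix.PosSemidef.of_dotProduct_mulVec_nonneg ?_ ?_
  · show (c • A)ᴴ = c • A
    rw [Matrix.conjTranspose_smul]
    rw [star_trivial, hA.1]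
  · intro x
    rw [Matrix.smul_mulVec, dotProduct_smul, smul_eq_mul]
    exact mul_nonneg hc (hA.dotProduct_mulVec_nonneg x)

end Aux

/-- If `(1-ε)L ⪯ L_s ⪯ (1+ε)L` with `ε ∈ (0,1)` for Laplacians of connected graphs,
then `tr(L_s†) + tr(L†) - 4 tr((L+L_s)†) ≤ [ε(4-ε)/((1-ε)(2+ε))] tr(L†)`. -/
theorem trace_error_bound {n : ℕ}
    (L Ls : Matrix (Fin n) (Fin n) ℝ)
    (hLsym : L.IsSymm) (hLpsd : L.PosSemidef)
    (hLone : L.mulVec (fun _ => 1) = 0)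
    (hLker : ∀ x, L.mulVec x = 0 → ∃ c : ℝ, x = fun _ => c)
    (hssym : Ls.IsSymm) (hspsd : Ls.PosSemidef)
    (hsone : Ls.mulVec (fun _ => 1) = 0)
    (hsker : ∀ x, Ls.mulVec x = 0 → ∃ c : ℝ, x = fun _ => c)
    (ε : ℝ) (hε0 : 0 < ε) (hε1 : ε < 1)
    (h1 : (Ls - (1 - ε) • L).PosSemidef)
    (h2 : ((1 + ε) • L - Ls).PosSemidef)
    (Ld Lsd Sd : Matrix (Fin n) (Fin n) ℝ)
    (hLd : IsMPInv L Ld) (hLsd : IsMPInv Ls Lsd) (hSd : IsMPInv (L + Ls) Sd) :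
    Lsd.trace + Ld.trace - 4 * Sd.trace ≤
      (ε * (4 - ε) / ((1 - ε) * (2 + ε))) * Ld.trace := by
  have hLsym' : Lᵀ = L := hLsym
  have hssym' : Lsᵀ = Ls := hssym
  have h1pos : (0:ℝ) < 1 - ε := by linarith
  have h1ne : (1:ℝ) - ε ≠ 0 := ne_of_gt h1pos
  have h2pos : (0:ℝ) < 2 + ε := by linarith
  have h2ne : (2:ℝ) + ε ≠ 0 := ne_of_gt h2pos
  -- first application: A = (1-ε)•L, B = Ls
  have happ1 : Lsd.trace ≤ ((1 - ε)⁻¹ • Ld).trace := by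
    apply trace_mp_mono (A := (1 - ε) • L) (B := Ls)
    · rw [Matrix.transpose_smul, hLsym']
    · exact psd_smul hLpsd (le_of_lt h1pos)
    · rw [Matrix.smul_mulVec, hLone, smul_zero]
    · intro x hx
      rw [Matrix.smul_mulVec] at hx
      exact hLker x ((smul_eq_zero.mp hx).resolve_left h1ne)
    · exact hssym'
    · exact hsone
    · exact hsker
    · exact h1
    · exact mp_smul h1ne hLd
    · exact hLsd
  -- second application: A = L + Ls, B = (2+ε)•L
  have happ2 : ((2 + ε)⁻¹ • Ld).trace ≤ Sd.trace := by
    apply trace_mp_mono (A := L + Ls) (B := (2 + ε) • L)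
    · rw [Matrix.transpose_add, hLsym', hssym']
    · exact hLpsd.add hspsd
    · rw [Matrix.add_mulVec, hLone, hsone, add_zero]
    · intro x hx
      rw [Matrix.add_mulVec] at hx
      have hdot : x ⬝ᵥ (L *ᵥ x) + x ⬝ᵥ (Ls *ᵥ x) = 0 := by
        have := congrArg (fun v => x ⬝ᵥ v) hx
        simpa [dotProduct_add] using this
      have p1 := hLpsd.dotProduct_mulVec_nonneg x
      have p2 := hspsd.dotProduct_mulVec_nonneg x
      simp only [star_trivial] at p1 p2
      have hL0 : x ⬝ᵥ (L *ᵥ x) = 0 := by linarith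
      have : L *ᵥ x = 0 := (hLpsd.dotProduct_mulVec_zero_iff x).mp (by simpa using hL0)
      exact hLker x this
    · rw [Matrix.transpose_smul, hLsym']
    · rw [Matrix.smul_mulVec, hLone, smul_zero]
    · intro x hx
      rw [Matrix.smul_mulVec] at hx
      exact hLker x ((smul_eq_zero.mp hx).resolve_left h2ne)
    · have heq : (2 + ε) • L - (L + Ls) = (1 + ε) • L - Ls := by module
      rw [heq]
      exact h2
    · exact hSd
    · exact mp_smul h2ne hLd
  rw [Matrix.trace_smul, smul_eq_mul] at happ1 happ2
  have key : (1 - ε)⁻¹ * Ld.trace + Ld.trace - 4 * ((2 + ε)⁻¹ * Ld.trace) =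
      (ε * (4 - ε) / ((1 - ε) * (2 + ε))) * Ld.trace := by
    field_simp
    ring
  linarith
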